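/- Let G be a graph of order n ≥ 2 with maximum degree Δ ≥ 3, and suppose G contains the star K_{1,Δ} as an induced subgraph. Then st_D(G) ≤ n − Δ. -/

import Mathlib

open SimpleGraph

/-- The distinguishing number of a graph: the least `d` such that there is a vertex
labeling with `d` labels preserved only by the trivial automorphism. -/
noncomputable def distNum {V : Type*} (G : SimpleGraph V) : ℕ :=
  sInf {d : ℕ | ∃ f : V → Fin d, ∀ φ : G ≃g G, (∀ x, f (φ x) = f x) → ∀ x, φ x = x}

/-- The distinguishing stability of a graph: the minimum cardinality of a proper subset
`S` of the vertex set whose removal changes the distinguishing number. -/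
noncomputable def stD {V : Type*} (G : SimpleGraph V) : ℕ :=
  sInf {k : ℕ | ∃ S : Set V, S ≠ Set.univ ∧ S.ncard = k ∧
    distNum (G.induce Sᶜ) ≠ distNum G}

/-- The distinguishing bondage number of a graph: the minimum cardinality of a set
of edges whose removal changes the distinguishing number. -/
noncomputable def bD {V : Type*} (G : SimpleGraph V) : ℕ :=
  sInf {k : ℕ | ∃ F : Set (Sym2 V), F ⊆ G.edgeSet ∧ F.ncard = k ∧
    distNum (G.deleteEdges F) ≠ distNum G}

lemma distSet_subset {V W : Type*} {G : SimpleGraph V} {H : SimpleGraph W} (e : G ≃g H) :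
    {d : ℕ | ∃ f : V → Fin d, ∀ φ : G ≃g G, (∀ x, f (φ x) = f x) → ∀ x, φ x = x} ⊆
    {d : ℕ | ∃ f : W → Fin d, ∀ φ : H ≃g H, (∀ x, f (φ x) = f x) → ∀ x, φ x = x} := by
  rintro d ⟨f, hf⟩
  refine ⟨f ∘ e.symm, fun φ hφ y => ?_⟩
  set ψ : G ≃g G := (e.trans φ).trans e.symm with hψ
  have hlab : ∀ x, f (ψ x) = f x := by
    intro x
    have := hφ (e x)
    simpa [hψ] using this
  have := hf ψ hlab (e.symm y)
  have h2 : e.symm (φ y) = e.symm y := by simpa [hψ] using this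
  exact e.symm.injective h2

lemma distNum_eq_of_iso {V W : Type*} {G : SimpleGraph V} {H : SimpleGraph W} (e : G ≃g H) :
    distNum G = distNum H :=
  congrArg sInf (Set.Subset.antisymm (distSet_subset e) (distSet_subset e.symm))

noncomputable def embedding_iso_range {V W : Type*} {G : SimpleGraph V} {H : SimpleGraph W} (e : H ↪g G) :
    H ≃g G.induce (Set.range ⇑e) := by
  refine ⟨Equiv.ofInjective e e.injective, ?_⟩
  intro a b
  exact e.map_adj_iff

lemma star_distNum {m : ℕ} (hm : 2 ≤ m) :
    distNum (completeBipartiteGraph (Fin 1) (Fin m)) = m := by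
  have h0 : 0 < m := by omega
  set K := completeBipartiteGraph (Fin 1) (Fin m) with hK
  have hmem : m ∈ {d : ℕ | ∃ f : Fin 1 ⊕ Fin m → Fin d,
      ∀ φ : K ≃g K, (∀ x, f (φ x) = f x) → ∀ x, φ x = x} := by
    refine ⟨Sum.elim (fun _ => ⟨0, h0⟩) id, fun φ hφ => ?_⟩
    have hc : φ (Sum.inl 0) = Sum.inl 0 := by
      rcases h : φ (Sum.inl 0) with a | j
      · exact congrArg Sum.inl (Subsingleton.elim a 0)
      · exfalso
        have h1 : K.Adj (Sum.inl 0) (Sum.inr ⟨0, by omega⟩) := by simp [hK]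
        have h2 : K.Adj (Sum.inl 0) (Sum.inr ⟨1, by omega⟩) := by simp [hK]
        have h1' := φ.map_adj_iff.2 h1
        have h2' := φ.map_adj_iff.2 h2
        rw [h] at h1' h2'
        rcases hx : φ (Sum.inr ⟨0, by omega⟩) with a1 | b1
        · rcases hy : φ (Sum.inr ⟨1, by omega⟩) with a2 | b2
          · have hcontr := φ.injective
              (hx.trans ((congrArg Sum.inl (Subsingleton.elim a1 a2)).trans hy.symm))
            simp at hcontr
          · rw [hy] at h2'; simp [hK] at h2'
        · rw [hx] at h1'; simp [hK] at h1'
    intro x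
    rcases x with a | i
    · rw [Subsingleton.elim a 0]; exact hc
    · rcases h : φ (Sum.inr i) with a | j
      · exfalso
        have : φ (Sum.inr i) = φ (Sum.inl 0) := by rw [h, hc, Subsingleton.elim a 0]
        exact absurd (φ.injective this) (by simp)
      · have := hφ (Sum.inr i)
        rw [h] at this
        simp at this
        exact congrArg Sum.inr this
  refine le_antisymm (Nat.sInf_le hmem) (le_csInf ⟨m, hmem⟩ ?_)
  rintro d ⟨f, hf⟩
  by_contra hlt
  push_neg at hlt
  obtain ⟨i, j, hij, hfij⟩ := Fintype.exists_ne_map_eq_of_card_lt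
    (fun i : Fin m => f (Sum.inr i)) (by simpa using hlt)
  have hL : ∀ x : Fin 1 ⊕ Fin m,
      (Equiv.swap (Sum.inr i : Fin 1 ⊕ Fin m) (Sum.inr j) x).isLeft = x.isLeft := by
    intro x
    rcases x with a | b
    · rw [Equiv.swap_apply_of_ne_of_ne (by simp) (by simp)]
    · rw [Equiv.swap_apply_def]
      split_ifs <;> simp
  have hR : ∀ x : Fin 1 ⊕ Fin m,
      (Equiv.swap (Sum.inr i : Fin 1 ⊕ Fin m) (Sum.inr j) x).isRight = x.isRight := by
    intro x
    rcases x with a | b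
    · rw [Equiv.swap_apply_of_ne_of_ne (by simp) (by simp)]
    · rw [Equiv.swap_apply_def]
      split_ifs <;> simp
  set φ : K ≃g K := ⟨Equiv.swap (Sum.inr i) (Sum.inr j), by
    intro a b
    simp only [hK, completeBipartiteGraph_adj]
    rw [hL, hL, hR, hR]⟩ with hφdef
  have hlab : ∀ x, f (φ x) = f x := by
    intro x
    show f (Equiv.swap (Sum.inr i) (Sum.inr j) x) = f x
    rcases eq_or_ne x (Sum.inr i) with rfl | h1
    · rw [Equiv.swap_apply_left]; exact hfij.symm
    rcases eq_or_ne x (Sum.inr j) with rfl | h2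
    · rw [Equiv.swap_apply_right]; exact hfij
    · rw [Equiv.swap_apply_of_ne_of_ne h1 h2]
  have := hf φ hlab (Sum.inr i)
  have : (Sum.inr j : Fin 1 ⊕ Fin m) = Sum.inr i := by
    simpa [hφdef, Equiv.swap_apply_left] using this
  simp at this
  exact hij this.symm

lemma stD_le_of_embedding {V W : Type*} [Fintype V] [Fintype W] [Nonempty W]
    {G : SimpleGraph V} {H : SimpleGraph W} (e : H ↪g G)
    (hne : distNum H ≠ distNum G) :
    stD G ≤ Fintype.card V - Fintype.card W := by
  apply Nat.sInf_le
  have hrange : (Set.range ⇑e).ncard = Fintype.card W := by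
    rw [← Set.image_univ, Set.ncard_image_of_injective _ e.injective, Set.ncard_univ,
      Nat.card_eq_fintype_card]
  refine ⟨(Set.range ⇑e)ᶜ, ?_, ?_, ?_⟩
  · intro h
    have : (Set.range ⇑e) = ∅ := by
      rw [← compl_compl (Set.range ⇑e), h, Set.compl_univ]
    exact absurd this (Set.range_nonempty _).ne_empty
  · have := Set.ncard_add_ncard_compl (Set.range ⇑e)
    rw [hrange, Nat.card_eq_fintype_card] at this
    omega
  · rw [compl_compl]
    rw [← distNum_eq_of_iso (embedding_iso_range e)]
    exact hne

/-- If $G$ contains an induced star $K_{1,\Delta}$ where $\Delta \ge 3$ is the maximum degree,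
then $st_D(G) \le n - \Delta$. -/
theorem stD_le_card_sub_maxDegree {V : Type*} [Fintype V] (G : SimpleGraph V)
    [DecidableRel G.Adj] (hn : 2 ≤ Fintype.card V) (hΔ : 3 ≤ G.maxDegree)
    (hstar : Nonempty (completeBipartiteGraph (Fin 1) (Fin G.maxDegree) ↪g G)) :
    stD G ≤ Fintype.card V - G.maxDegree := by
  obtain ⟨e⟩ := hstar
  set Δ := G.maxDegree with hΔdef
  by_cases hD : distNum G = Δ
  · -- remove a leaf: embed star with Δ-1 leaves
    have hcast : ∀ a b : Fin 1 ⊕ Fin (Δ - 1),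
        (completeBipartiteGraph (Fin 1) (Fin Δ)).Adj
          (Sum.map id (Fin.castLE (by omega)) a) (Sum.map id (Fin.castLE (by omega)) b) ↔
        (completeBipartiteGraph (Fin 1) (Fin (Δ - 1))).Adj a b := by
      intro a b
      rcases a with a | a <;> rcases b with b | b <;> simp
    have e2 : completeBipartiteGraph (Fin 1) (Fin (Δ - 1)) ↪g
        completeBipartiteGraph (Fin 1) (Fin Δ) :=
      ⟨⟨Sum.map id (Fin.castLE (by omega)),
        Function.Injective.sumMap (fun a b h => h) (Fin.castLE_injective _)⟩, hcast _ _⟩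
    have e' := e.comp e2
    have key := stD_le_of_embedding e' (by
      rw [star_distNum (by omega), hD]
      omega)
    have hcard : Fintype.card (Fin 1 ⊕ Fin (Δ - 1)) = Δ := by simp; omega
    rw [hcard] at key
    exact key
  · have key := stD_le_of_embedding e (by rw [star_distNum (by omega)]; exact fun h => hD h.symm)
    have hcard : Fintype.card (Fin 1 ⊕ Fin Δ) = Δ + 1 := by simp; omega
    rw [hcard] at key
    exact key.trans (by omega)
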